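/- Let G be a group, T : ℤ → G a family of elements, and c ∈ G an element such that T(a) · T(a+1) = c for every a ∈ ℤ. Then for all a, b ∈ ℤ there exist n ∈ ℕ, integers a₁, …, a_n, signs ε₁, …, ε_n ∈ {1, −1}, and an integer m such that T(a) · T(b) = c^m · T(a_n)^{2ε_n} · ⋯ · T(a₁)^{2ε₁}. In particular, T(a) · T(b) lies in the subgroup of G generated by c together with the squares { T(x)² : x ∈ ℤ }. -/

import Mathlib

/-- Abstract form of Proposition 2.12: assuming the relation `T a * T (a+1) = c` for all
`a : ℤ`, any product `T a * T b` can be written as `c ^ m` times a product of squares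
`T aᵢ ^ (±2)`; in particular it lies in the subgroup generated by `c` and the squares
`T x ^ 2`. -/
theorem stmt_1 {G : Type*} [Group G] (T : ℤ → G) (c : G)
    (h : ∀ x : ℤ, T x * T (x + 1) = c) (a b : ℤ) :
    (∃ (n : ℕ) (as : Fin n → ℤ) (ε : Fin n → ℤ) (m : ℤ),
      (∀ i, ε i = 1 ∨ ε i = -1) ∧
      T a * T b = c ^ m * (List.ofFn fun i : Fin n => T (as i) ^ (2 * ε i)).prod) ∧
    T a * T b ∈ Subgroup.closure ({c} ∪ { g : G | ∃ x : ℤ, g = T x ^ 2 }) := by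
  have conjpow : ∀ (u v : G) (n : ℤ), (u⁻¹ * v * u) ^ n = u⁻¹ * v ^ n * u := by
    intro u v n
    rw [show u⁻¹ * v * u = u⁻¹ * v * (u⁻¹)⁻¹ by rw [inv_inv], conj_zpow, inv_inv]
  -- step relations
  have hstep : ∀ x : ℤ, T (x + 1) = (T x)⁻¹ * c := by
    intro x
    have := h x
    rw [← this]
    group
  have conj : ∀ x : ℤ, c⁻¹ * T x * c = T (x + 2) := by
    intro x
    have h2 : T (x + 2) = (T (x + 1))⁻¹ * c := by
      have := hstep (x + 1); rw [show x + 1 + 1 = x + 2 by ring] at this; exact this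
    rw [h2, hstep x]
    group
  have conjinv : ∀ x : ℤ, c * T x * c⁻¹ = T (x - 2) := by
    intro x
    have := conj (x - 2)
    rw [show x - 2 + 2 = x by ring] at this
    rw [← this]
    group
  set f : ℤ × ℤ → G := fun p => T p.1 ^ (2 * p.2) with hf
  have fconjC : ∀ p : ℤ × ℤ, f p * c = c * f (p.1 + 2, p.2) := by
    intro p
    have : T (p.1 + 2) ^ (2 * p.2) = c⁻¹ * T p.1 ^ (2 * p.2) * c := by
      rw [← conj p.1, conjpow]
    rw [hf]
    simp only []
    rw [this]
    group
  have fconjCinv : ∀ p : ℤ × ℤ, f p * c⁻¹ = c⁻¹ * f (p.1 - 2, p.2) := by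
    intro p
    have : T (p.1 - 2) ^ (2 * p.2) = c * T p.1 ^ (2 * p.2) * c⁻¹ := by
      rw [← conjinv p.1, show c * T p.1 * c⁻¹ = (c⁻¹)⁻¹ * T p.1 * c⁻¹ by rw [inv_inv],
        conjpow, inv_inv]
    rw [hf]
    simp only []
    rw [this]
    group
  -- conjugation shifts the lists of signed squares
  have shiftC : ∀ l : List (ℤ × ℤ),
      (l.map f).prod * c = c * ((l.map (fun p => (p.1 + 2, p.2))).map f).prod := by
    intro l
    induction l with
    | nil => simp
    | cons p l ih =>
      simp only [List.map_cons, List.prod_cons]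
      rw [mul_assoc, ih, ← mul_assoc, fconjC, mul_assoc]
  have shiftCinv : ∀ l : List (ℤ × ℤ),
      (l.map f).prod * c⁻¹ = c⁻¹ * ((l.map (fun p => (p.1 - 2, p.2))).map f).prod := by
    intro l
    induction l with
    | nil => simp
    | cons p l ih =>
      simp only [List.map_cons, List.prod_cons]
      rw [mul_assoc, ih, ← mul_assoc, fconjCinv, mul_assoc]
  -- the predicate: g is c^m times a product of signed squares
  set P : G → Prop := fun g => ∃ l : List (ℤ × ℤ),
      (∀ p ∈ l, p.2 = 1 ∨ p.2 = -1) ∧ ∃ m : ℤ, g = c ^ m * (l.map f).prod with hP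
  have PmulSq : ∀ g, P g → ∀ x e : ℤ, (e = 1 ∨ e = -1) → P (g * T x ^ (2 * e)) := by
    rintro g ⟨l, hl, m, rfl⟩ x e he
    refine ⟨l ++ [(x, e)], ?_, m, ?_⟩
    · intro p hp
      rcases List.mem_append.1 hp with hp | hp
      · exact hl p hp
      · simp at hp; subst hp; exact he
    · rw [List.map_append, List.prod_append]
      simp [mul_assoc, f]
  have PmulC : ∀ g, P g → P (g * c) := by
    rintro g ⟨l, hl, m, rfl⟩
    refine ⟨l.map (fun p => (p.1 + 2, p.2)), ?_, m + 1, ?_⟩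
    · intro p hp
      rcases List.mem_map.1 hp with ⟨q, hq, rfl⟩
      exact hl q hq
    · rw [mul_assoc, shiftC l, ← mul_assoc, ← zpow_add_one]
  have PmulCinv : ∀ g, P g → P (g * c⁻¹) := by
    rintro g ⟨l, hl, m, rfl⟩
    refine ⟨l.map (fun p => (p.1 - 2, p.2)), ?_, m - 1, ?_⟩
    · intro p hp
      rcases List.mem_map.1 hp with ⟨q, hq, rfl⟩
      exact hl q hq
    · rw [mul_assoc, shiftCinv l, ← mul_assoc, ← zpow_sub_one]
  -- main induction
  have up : ∀ k : ℤ, P (T a * T k) → P (T a * T (k + 1)) := by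
    intro k ih
    have : T a * T (k + 1) = (T a * T k) * T k ^ (2 * (-1 : ℤ)) * c := by
      rw [hstep k]
      group
    rw [this]
    exact PmulC _ (PmulSq _ ih k (-1) (Or.inr rfl))
  have down : ∀ k : ℤ, P (T a * T k) → P (T a * T (k - 1)) := by
    intro k ih
    have hk : T k = (T (k - 1))⁻¹ * c := by
      have := hstep (k - 1); rw [show k - 1 + 1 = k by ring] at this; exact this
    have : T a * T (k - 1) = (T a * T k) * c⁻¹ * T (k - 1) ^ (2 * (1 : ℤ)) := by
      rw [hk]
      group
    rw [this]
    exact PmulSq _ (PmulCinv _ ih) (k - 1) 1 (Or.inl rfl)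
  have key : ∀ b : ℤ, P (T a * T b) := by
    have Q : ∀ d : ℤ, P (T a * T (a + d)) := by
      intro d
      induction d using Int.induction_on with
      | zero =>
        refine ⟨[(a, 1)], by simp, 0, ?_⟩
        have h2 : T a ^ (2:ℤ) = T a * T a := by
          rw [show (2:ℤ) = 1 + 1 by norm_num, zpow_add, zpow_one]
        simp [f, h2]
      | succ i ih =>
        rw [show a + ((i : ℤ) + 1) = (a + (i : ℤ)) + 1 by ring]
        exact up _ ih
      | pred i ih =>
        rw [show a + (-(i : ℤ) - 1) = (a + -(i : ℤ)) - 1 by ring]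
        exact down _ ih
    intro b
    have := Q (b - a)
    rwa [show a + (b - a) = b by ring] at this
  obtain ⟨l, hl, m, heq⟩ := key b
  constructor
  · refine ⟨l.length, fun i => (l.get i).1, fun i => (l.get i).2, m, ?_, ?_⟩
    · intro i; exact hl _ (l.get_mem i)
    · rw [heq]
      congr 1
      have : l.map f = List.ofFn (f ∘ l.get) := by
        rw [← List.map_ofFn, List.ofFn_get]
      rw [this]
      rfl
  · rw [heq]
    have hc : c ∈ Subgroup.closure ({c} ∪ { g : G | ∃ x : ℤ, g = T x ^ 2 }) :=
      Subgroup.subset_closure (Or.inl rfl)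
    refine mul_mem (zpow_mem hc m) (Subgroup.list_prod_mem _ ?_)
    intro g hg
    rcases List.mem_map.1 hg with ⟨p, hp, rfl⟩
    have hsq : T p.1 ^ 2 ∈ Subgroup.closure ({c} ∪ { g : G | ∃ x : ℤ, g = T x ^ 2 }) :=
      Subgroup.subset_closure (Or.inr ⟨p.1, rfl⟩)
    have : f p = (T p.1 ^ 2) ^ p.2 := by
      rw [hf]
      simp only []
      rw [← zpow_natCast (T p.1) 2, ← zpow_mul]
      norm_num
    rw [this]
    exact zpow_mem hsq p.2
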